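/- Let ψ ∈ L²(ℝ²) and let j ≥ 0 be an integer. Then the closed linear span of {D_{2^j} (T^t_{(k,l)})^{2^{-2j}} ψ : k, l ∈ ℤ} in L²(ℝ²) equals the closed linear span of {T^t_{(k',l')} D_{2^j} (T^t_{(k,l)})^{2^{-2j}} ψ : k', l' ∈ ℤ, k, l ∈ {0, 1, ..., 2^j − 1}}. -/

import Mathlib

open MeasureTheory Complex

noncomputable section

/-- The `λ`-twisted translation `(T^t_{(k,l)})^λ f (x,y) = e^{πiλ(xl - yk)} f(x-k, y-l)`. -/
def twistedTranslate (lam : ℝ) (k l : ℤ) (f : ℝ × ℝ → ℂ) : ℝ × ℝ → ℂ :=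
  fun p => Complex.exp ((↑(Real.pi * lam * (p.1 * l - p.2 * k)) : ℂ) * Complex.I) *
    f (p.1 - k, p.2 - l)

/-- The dilation `D_a f (x,y) = a f(ax, ay)`. -/
def dilate (a : ℝ) (f : ℝ × ℝ → ℂ) : ℝ × ℝ → ℂ :=
  fun p => (a : ℂ) * f (a * p.1, a * p.2)

/-- The kernel `K^λ_g(ξ,η) = ∫_ℝ g(x, η-ξ) e^{πiλx(η+ξ)} dx` of the Weyl transform `W_λ(g)`. -/
def weylKernel (lam : ℝ) (g : ℝ × ℝ → ℂ) (ξ η : ℝ) : ℂ :=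
  ∫ x : ℝ, g (x, η - ξ) * Complex.exp ((↑(Real.pi * lam * x * (η + ξ)) : ℂ) * Complex.I)

lemma memℒp_unimodular_mul {e f : ℝ × ℝ → ℂ} (he : AEStronglyMeasurable e volume)
    (hnorm : ∀ x, ‖e x‖ = 1) (hf : MemLp f 2 (volume : Measure (ℝ × ℝ))) :
    MemLp (fun x => e x * f x) 2 volume := by
  refine ⟨he.mul hf.1, ?_⟩
  have h : eLpNorm (fun x => e x * f x) 2 volume = eLpNorm f 2 volume := by
    apply eLpNorm_congr_norm_ae
    filter_upwards with x
    rw [norm_mul, hnorm x, one_mul]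
  rw [h]; exact hf.2

lemma memℒp_twistedTranslate (lam : ℝ) (k l : ℤ) {f : ℝ × ℝ → ℂ}
    (hf : MemLp f 2 (volume : Measure (ℝ × ℝ))) :
    MemLp (twistedTranslate lam k l f) 2 volume := by
  have hmp : MeasurePreserving (fun p : ℝ × ℝ => p - ((k : ℝ), (l : ℝ))) volume volume :=
    measurePreserving_sub_right volume _
  have h2 : MemLp (fun p : ℝ × ℝ => f (p.1 - k, p.2 - l)) 2 volume := by
    have := hf.comp_measurePreserving hmp
    simpa [Function.comp_def, Prod.sub_def] using this
  have he : AEStronglyMeasurable (fun p : ℝ × ℝ =>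
      Complex.exp ((↑(Real.pi * lam * (p.1 * l - p.2 * k)) : ℂ) * Complex.I)) volume := by
    apply Continuous.aestronglyMeasurable
    fun_prop
  exact memℒp_unimodular_mul he (fun x => Complex.norm_exp_ofReal_mul_I _) h2

lemma memℒp_dilate {a : ℝ} (ha : a ≠ 0) {f : ℝ × ℝ → ℂ}
    (hf : MemLp f 2 (volume : Measure (ℝ × ℝ))) :
    MemLp (dilate a f) 2 volume := by
  have hmap : Measure.map (fun p : ℝ × ℝ => a • p) (volume : Measure (ℝ × ℝ)) =
      ENNReal.ofReal |(a ^ Module.finrank ℝ (ℝ × ℝ))⁻¹| • volume :=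
    Measure.map_addHaar_smul volume ha
  have hmem : MemLp f 2 (Measure.map (fun p : ℝ × ℝ => a • p) (volume : Measure (ℝ × ℝ))) := by
    rw [hmap]
    exact hf.smul_measure (by finiteness)
  have hcomp : MemLp (f ∘ fun p : ℝ × ℝ => a • p) 2 (volume : Measure (ℝ × ℝ)) :=
    (memLp_map_measure_iff hmem.1 (by fun_prop)).mp hmem
  have h : MemLp (fun p : ℝ × ℝ => f (a * p.1, a * p.2)) 2 volume := hcomp
  exact h.const_mul (a : ℂ)

/-- The twisted translation as an operator on `L²(ℝ²)`. -/
def twistedTranslateLp (lam : ℝ) (k l : ℤ) (f : Lp ℂ 2 (volume : Measure (ℝ × ℝ))) :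
    Lp ℂ 2 (volume : Measure (ℝ × ℝ)) :=
  (memℒp_twistedTranslate lam k l (Lp.memLp f)).toLp _

/-- The dilation as an operator on `L²(ℝ²)` (with junk value `0` for `a = 0`). -/
def dilateLp (a : ℝ) (f : Lp ℂ 2 (volume : Measure (ℝ × ℝ))) :
    Lp ℂ 2 (volume : Measure (ℝ × ℝ)) :=
  if ha : a = 0 then 0 else (memℒp_dilate ha (Lp.memLp f)).toLp _


lemma twistedTranslate_congr_ae (lam : ℝ) (k l : ℤ) {g h : ℝ × ℝ → ℂ}
    (hgh : g =ᵐ[volume] h) :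
    twistedTranslate lam k l g =ᵐ[volume] twistedTranslate lam k l h := by
  have hq := (measurePreserving_sub_right (volume : Measure (ℝ × ℝ))
    ((k : ℝ), (l : ℝ))).quasiMeasurePreserving.ae_eq_comp hgh
  filter_upwards [hq] with p hp
  have : g (p.1 - k, p.2 - l) = h (p.1 - k, p.2 - l) := by
    simpa [Function.comp, Prod.sub_def] using hp
  simp [twistedTranslate, this]

lemma dilate_congr_ae {a : ℝ} (ha : a ≠ 0) {g h : ℝ × ℝ → ℂ}
    (hgh : g =ᵐ[volume] h) :
    dilate a g =ᵐ[volume] dilate a h := by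
  have hqmp : Measure.QuasiMeasurePreserving (fun p : ℝ × ℝ => a • p)
      (volume : Measure (ℝ × ℝ)) volume := by
    refine ⟨by fun_prop, ?_⟩
    rw [Measure.map_addHaar_smul volume ha]
    exact Measure.smul_absolutelyContinuous
  have hq := hqmp.ae_eq_comp hgh
  filter_upwards [hq] with p hp
  have : g (a * p.1, a * p.2) = h (a * p.1, a * p.2) := by
    simpa [Function.comp, Prod.smul_def, smul_eq_mul] using hp
  simp [dilate, this]

lemma key_fun (lam a : ℝ) (hla : lam * a ^ 2 = 1) (k l k' l' K L : ℤ)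
    (hK : (K : ℝ) = a * k' + k) (hL : (L : ℝ) = a * l' + l) (ψ : ℝ × ℝ → ℂ) :
    twistedTranslate 1 k' l' (dilate a (twistedTranslate lam k l ψ)) =
      Complex.exp ((↑(Real.pi * lam * a * ((l' : ℝ) * k - (k' : ℝ) * l)) : ℂ) * Complex.I) •
        dilate a (twistedTranslate lam K L ψ) := by
  funext p
  simp only [twistedTranslate, dilate, Pi.smul_apply, smul_eq_mul]
  have harg : (a * (p.1 - ↑k') - ↑k, a * (p.2 - ↑l') - ↑l)
      = (a * p.1 - ↑K, a * p.2 - ↑L) := by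
    rw [Prod.mk.injEq]
    constructor <;> [rw [hK]; rw [hL]] <;> ring
  rw [harg]
  have hlaC : (lam : ℂ) * (a : ℂ) ^ 2 = 1 := by exact_mod_cast hla
  have hexp : Complex.exp ((↑(Real.pi * 1 * (p.1 * l' - p.2 * k')) : ℂ) * Complex.I) *
      Complex.exp ((↑(Real.pi * lam * ((a * (p.1 - ↑k')) * l - (a * (p.2 - ↑l')) * k)) : ℂ)
        * Complex.I) =
      Complex.exp ((↑(Real.pi * lam * a * ((l' : ℝ) * k - (k' : ℝ) * l)) : ℂ) * Complex.I) *
      Complex.exp ((↑(Real.pi * lam * ((a * p.1) * L - (a * p.2) * K)) : ℂ) * Complex.I) := by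
    rw [← Complex.exp_add, ← Complex.exp_add, ← add_mul, ← add_mul]
    congr 2
    have hK' : (K : ℂ) = (a : ℂ) * k' + k := by exact_mod_cast hK
    have hL' : (L : ℂ) = (a : ℂ) * l' + l := by exact_mod_cast hL
    push_cast
    linear_combination (-(Real.pi : ℂ) * (p.1 : ℂ) * (l' : ℂ) + (Real.pi : ℂ) * (p.2 : ℂ) * (k' : ℂ)) * hlaC - ((Real.pi : ℂ) * lam * a * p.1) * hL' + ((Real.pi : ℂ) * lam * a * p.2) * hK'
  calc Complex.exp ((↑(Real.pi * 1 * (p.1 * l' - p.2 * k')) : ℂ) * Complex.I) *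
        ((a : ℂ) * (Complex.exp ((↑(Real.pi * lam * ((a * (p.1 - ↑k')) * l -
          (a * (p.2 - ↑l')) * k)) : ℂ) * Complex.I) * ψ (a * p.1 - ↑K, a * p.2 - ↑L)))
      = (Complex.exp ((↑(Real.pi * 1 * (p.1 * l' - p.2 * k')) : ℂ) * Complex.I) *
          Complex.exp ((↑(Real.pi * lam * ((a * (p.1 - ↑k')) * l - (a * (p.2 - ↑l')) * k)) : ℂ)
            * Complex.I)) * ((a : ℂ) * ψ (a * p.1 - ↑K, a * p.2 - ↑L)) := by ring
    _ = _ := by rw [hexp]; ring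


lemma key_Lp (lam a : ℝ) (ha : a ≠ 0) (hla : lam * a ^ 2 = 1) (k l k' l' K L : ℤ)
    (hK : (K : ℝ) = a * k' + k) (hL : (L : ℝ) = a * l' + l)
    (F : Lp ℂ 2 (volume : Measure (ℝ × ℝ))) :
    twistedTranslateLp 1 k' l' (dilateLp a (twistedTranslateLp lam k l F)) =
      Complex.exp ((↑(Real.pi * lam * a * ((l' : ℝ) * k - (k' : ℝ) * l)) : ℂ) * Complex.I) •
        dilateLp a (twistedTranslateLp lam K L F) := by
  set c : ℂ := Complex.exp ((↑(Real.pi * lam * a * ((l' : ℝ) * k - (k' : ℝ) * l)) : ℂ) *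
    Complex.I) with hc
  apply Lp.ext
  have h1 : (twistedTranslateLp lam k l F : ℝ × ℝ → ℂ) =ᵐ[volume]
      twistedTranslate lam k l (F : ℝ × ℝ → ℂ) := MemLp.coeFn_toLp _
  have h2 : (dilateLp a (twistedTranslateLp lam k l F) : ℝ × ℝ → ℂ) =ᵐ[volume]
      dilate a (twistedTranslate lam k l (F : ℝ × ℝ → ℂ)) := by
    rw [dilateLp, dif_neg ha]
    exact (MemLp.coeFn_toLp _).trans (dilate_congr_ae ha h1)
  have h3 : (twistedTranslateLp 1 k' l' (dilateLp a (twistedTranslateLp lam k l F)) :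
      ℝ × ℝ → ℂ) =ᵐ[volume]
      twistedTranslate 1 k' l' (dilate a (twistedTranslate lam k l (F : ℝ × ℝ → ℂ))) :=
    (MemLp.coeFn_toLp _).trans (twistedTranslate_congr_ae _ _ _ h2)
  have h4 : (dilateLp a (twistedTranslateLp lam K L F) : ℝ × ℝ → ℂ) =ᵐ[volume]
      dilate a (twistedTranslate lam K L (F : ℝ × ℝ → ℂ)) := by
    rw [dilateLp, dif_neg ha]
    exact (MemLp.coeFn_toLp _).trans (dilate_congr_ae ha (MemLp.coeFn_toLp _))
  have h5 : ((c • dilateLp a (twistedTranslateLp lam K L F) : Lp ℂ 2 volume) : ℝ × ℝ → ℂ)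
      =ᵐ[volume] c • dilate a (twistedTranslate lam K L (F : ℝ × ℝ → ℂ)) := by
    refine (Lp.coeFn_smul c _).trans ?_
    filter_upwards [h4] with p hp
    simp [hp]
  refine h3.trans (.trans ?_ h5.symm)
  rw [key_fun lam a hla k l k' l' K L hK hL]

/-- For `ψ ∈ L²(ℝ²)` and an integer `j ≥ 0`, the closed linear span of
`{D_{2^j} (T^t_{(k,l)})^{2^{-2j}} ψ : k, l ∈ ℤ}` equals the closed linear span of
`{T^t_{(k',l')} D_{2^j} (T^t_{(k,l)})^{2^{-2j}} ψ : k', l' ∈ ℤ, k, l ∈ {0, ..., 2^j - 1}}`. -/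
theorem statement_9 (ψ : ℝ × ℝ → ℂ) (hψ : MemLp ψ 2 (volume : Measure (ℝ × ℝ))) (j : ℕ) :
    (Submodule.span ℂ (Set.range fun kl : ℤ × ℤ =>
        dilateLp ((2 : ℝ) ^ j) (twistedTranslateLp ((2 : ℝ) ^ (-(2 * (j : ℤ)))) kl.1 kl.2
          (hψ.toLp ψ)))).topologicalClosure =
      (Submodule.span ℂ (Set.range fun q : (ℤ × ℤ) × Fin (2 ^ j) × Fin (2 ^ j) =>
        twistedTranslateLp 1 q.1.1 q.1.2
          (dilateLp ((2 : ℝ) ^ j) (twistedTranslateLp ((2 : ℝ) ^ (-(2 * (j : ℤ))))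
            ((q.2.1 : ℕ) : ℤ) ((q.2.2 : ℕ) : ℤ) (hψ.toLp ψ))))).topologicalClosure := by
  set lam : ℝ := (2 : ℝ) ^ (-(2 * (j : ℤ))) with hlam
  set a : ℝ := (2 : ℝ) ^ j with haj
  have ha : a ≠ 0 := by positivity
  have hla : lam * a ^ 2 = 1 := by
    rw [hlam, haj, ← pow_mul, ← zpow_natCast (2 : ℝ) (j * 2),
      ← zpow_add₀ (by norm_num : (2 : ℝ) ≠ 0)]
    have : (-(2 * (j : ℤ)) + (j * 2 : ℕ) : ℤ) = 0 := by push_cast; ring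
    rw [this, zpow_zero]
  set Ψ := hψ.toLp ψ with hΨ
  set g : ℤ × ℤ → Lp ℂ 2 (volume : Measure (ℝ × ℝ)) := fun kl =>
    dilateLp a (twistedTranslateLp lam kl.1 kl.2 Ψ) with hg
  have hpow : ((2 : ℤ) ^ j : ℤ) ≠ 0 := by positivity
  have hpowpos : (0 : ℤ) < (2 : ℤ) ^ j := by positivity
  congr 1
  refine Submodule.span_eq_span ?_ ?_
  · rintro _ ⟨⟨K, L⟩, rfl⟩
    set k' : ℤ := K / 2 ^ j
    set l' : ℤ := L / 2 ^ j
    have hk0 : 0 ≤ K % 2 ^ j := Int.emod_nonneg K hpow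
    have hl0 : 0 ≤ L % 2 ^ j := Int.emod_nonneg L hpow
    have hklt : K % 2 ^ j < 2 ^ j := Int.emod_lt_of_pos K hpowpos
    have hllt : L % 2 ^ j < 2 ^ j := Int.emod_lt_of_pos L hpowpos
    set kf : Fin (2 ^ j) := ⟨(K % 2 ^ j).toNat, by
      rw [Int.toNat_lt' (n := 2 ^ j) (by positivity)]; exact_mod_cast hklt⟩
    set lf : Fin (2 ^ j) := ⟨(L % 2 ^ j).toNat, by
      rw [Int.toNat_lt' (n := 2 ^ j) (by positivity)]; exact_mod_cast hllt⟩
    have hkf : ((kf : ℕ) : ℤ) = K % 2 ^ j := Int.toNat_of_nonneg hk0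
    have hlf : ((lf : ℕ) : ℤ) = L % 2 ^ j := Int.toNat_of_nonneg hl0
    have hK : (K : ℝ) = a * k' + ((kf : ℕ) : ℤ) := by
      rw [hkf, haj]
      have h : ((2 : ℤ) ^ j * k' + K % 2 ^ j : ℤ) = K := Int.mul_ediv_add_emod K (2 ^ j)
      calc (K : ℝ) = (((2 : ℤ) ^ j * k' + K % 2 ^ j : ℤ) : ℝ) := by rw [h]
        _ = _ := by push_cast; ring
    have hL : (L : ℝ) = a * l' + ((lf : ℕ) : ℤ) := by
      rw [hlf, haj]
      have h : ((2 : ℤ) ^ j * l' + L % 2 ^ j : ℤ) = L := Int.mul_ediv_add_emod L (2 ^ j)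
      calc (L : ℝ) = (((2 : ℤ) ^ j * l' + L % 2 ^ j : ℤ) : ℝ) := by rw [h]
        _ = _ := by push_cast; ring
    have hkey := key_Lp lam a ha hla ((kf : ℕ) : ℤ) ((lf : ℕ) : ℤ) k' l' K L hK hL Ψ
    set c : ℂ := Complex.exp ((↑(Real.pi * lam * a *
      ((l' : ℝ) * (((kf : ℕ) : ℤ) : ℝ) - (k' : ℝ) * (((lf : ℕ) : ℤ) : ℝ))) : ℂ) *
      Complex.I) with hcdef
    have hgKL : g (K, L) = c⁻¹ • twistedTranslateLp 1 k' l'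
        (dilateLp a (twistedTranslateLp lam ((kf : ℕ) : ℤ) ((lf : ℕ) : ℤ) Ψ)) := by
      rw [hkey, smul_smul, inv_mul_cancel₀ (Complex.exp_ne_zero _), one_smul]
    rw [hgKL]
    exact Submodule.smul_mem _ _ (Submodule.subset_span ⟨((k', l'), kf, lf), rfl⟩)
  · rintro _ ⟨⟨⟨k', l'⟩, kf, lf⟩, rfl⟩
    set K : ℤ := 2 ^ j * k' + ((kf : ℕ) : ℤ)
    set L : ℤ := 2 ^ j * l' + ((lf : ℕ) : ℤ)
    have hK : (K : ℝ) = a * k' + ((kf : ℕ) : ℤ) := by rw [haj]; push_cast [K]; ring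
    have hL : (L : ℝ) = a * l' + ((lf : ℕ) : ℤ) := by rw [haj]; push_cast [L]; ring
    have hkey := key_Lp lam a ha hla ((kf : ℕ) : ℤ) ((lf : ℕ) : ℤ) k' l' K L hK hL Ψ
    show twistedTranslateLp 1 k' l'
      (dilateLp a (twistedTranslateLp lam ((kf : ℕ) : ℤ) ((lf : ℕ) : ℤ) Ψ)) ∈ _
    rw [hkey]
    exact Submodule.smul_mem _ _ (Submodule.subset_span ⟨(K, L), rfl⟩)
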